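/- Let μ be a probability measure on (0, ∞) such that ∫ |log x| dμ(x) < ∞ and ∬ (log x − log y)/(x − y) dμ(x) dμ(y) < ∞ (integrand extended continuously by 1/x on the diagonal). Then ∫ log x dμ(x) + log( ∬ (log x − log y)/(x − y) dμ(x) dμ(y) ) ≥ 0. -/

import Mathlib

open MeasureTheory Real Set Filter
open scoped ENNReal Topology

/-- The logarithmic divided difference `(log a - log b)/(a - b)`, extended
continuously by `1/a` on the diagonal. -/
noncomputable def logDiff (a b : ℝ) : ℝ :=
  if a = b then 1 / a else (Real.log a - Real.log b) / (a - b)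

lemma two_mul_sub_le {t : ℝ} (ht : 1 ≤ t) : 2 * (t - 1) ≤ (t + 1) * Real.log t := by
  have key : MonotoneOn (fun t : ℝ => (t + 1) * Real.log t - 2 * (t - 1)) (Ici 1) := by
    have hder : ∀ x ∈ interior (Ici (1:ℝ)),
        HasDerivAt (fun t : ℝ => (t + 1) * Real.log t - 2 * (t - 1))
          (Real.log x + (x + 1) * x⁻¹ - 2) x := by
      intro x hx
      rw [interior_Ici] at hx
      have hx0 : (0:ℝ) < x := lt_trans one_pos hx
      have h1 : HasDerivAt (fun t : ℝ => (t + 1) * Real.log t)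
          (1 * Real.log x + (x + 1) * x⁻¹) x :=
        ((hasDerivAt_id x).add_const 1).mul (Real.hasDerivAt_log hx0.ne')
      have h2 : HasDerivAt (fun t : ℝ => 2 * (t - 1)) 2 x := by
        simpa using ((hasDerivAt_id x).sub_const 1).const_mul 2
      have h3 := h1.sub h2; rw [one_mul] at h3; exact h3
    apply monotoneOn_of_deriv_nonneg (convex_Ici 1)
    · apply ContinuousOn.sub
      · refine (continuousOn_id.add continuousOn_const).mul
          (Real.continuousOn_log.mono ?_)
        intro x hx
        simp only [mem_Ici] at hx
        simp only [mem_compl_iff, mem_singleton_iff]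
        intro h; rw [h] at hx; linarith
      · exact continuousOn_const.mul (continuousOn_id.sub continuousOn_const)
    · intro x hx
      exact (hder x hx).differentiableAt.differentiableWithinAt
    · intro x hx
      rw [(hder x hx).deriv]
      rw [interior_Ici] at hx
      have hx0 : (0:ℝ) < x := lt_trans one_pos hx
      have hlog : 1 - x⁻¹ ≤ Real.log x := by
        have := Real.log_le_sub_one_of_pos (inv_pos.mpr hx0)
        rw [Real.log_inv] at this
        linarith
      have : (x + 1) * x⁻¹ = 1 + x⁻¹ := by field_simp
      rw [this]; linarith
  have h := key (self_mem_Ici) (mem_Ici.mpr ht) ht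
  simp only [Real.log_one] at h
  linarith

lemma log_lower {x y : ℝ} (hx : 0 < x) (hxy : x ≤ y) :
    2 * (y - x) ≤ (y + x) * (Real.log y - Real.log x) := by
  have hy : 0 < y := lt_of_lt_of_le hx hxy
  have ht : 1 ≤ y / x := (one_le_div hx).2 hxy
  have h := two_mul_sub_le ht
  rw [Real.log_div hy.ne' hx.ne'] at h
  have h2 := mul_le_mul_of_nonneg_left h hx.le
  have e1 : x * (2 * (y / x - 1)) = 2 * (y - x) := by field_simp
  have e2 : x * ((y / x + 1) * (Real.log y - Real.log x))
      = (y + x) * (Real.log y - Real.log x) := by field_simp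
  rw [e1, e2] at h2
  exact h2

lemma key_pointwise {a c : ℝ} (ha : 0 < a) (hc : 0 < c) :
    2 - Real.log a + Real.log c ≤ 2 * c * logDiff a c := by
  rcases eq_or_ne a c with rfl | hne
  · unfold logDiff; rw [if_pos rfl]
    rw [mul_one_div, mul_div_assoc]
    rw [div_self ha.ne']
    simp
  · unfold logDiff; rw [if_neg hne]
    rcases hne.lt_or_gt with hlt | hgt
    · -- a < c
      have h := log_lower ha hlt.le
      have e : (Real.log a - Real.log c) / (a - c) = (Real.log c - Real.log a) / (c - a) := by
        rw [← neg_sub (Real.log c), ← neg_sub c, neg_div_neg_eq]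
      rw [e, ← mul_div_assoc, le_div_iff₀ (sub_pos.2 hlt)]
      nlinarith
    · -- c < a
      have h := log_lower hc hgt.le
      rw [← mul_div_assoc, le_div_iff₀ (sub_pos.2 hgt)]
      nlinarith

lemma logDiff_nonneg {a b : ℝ} (ha : 0 < a) (hb : 0 < b) : 0 ≤ logDiff a b := by
  unfold logDiff
  rcases eq_or_ne a b with rfl | hne
  · rw [if_pos rfl]; positivity
  · rw [if_neg hne]
    rcases hne.lt_or_gt with hlt | hgt
    · apply div_nonneg_of_nonpos
      · simp only [sub_nonpos]
        exact Real.log_le_log ha hlt.le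
      · linarith
    · apply div_nonneg
      · simp only [sub_nonneg]
        exact Real.log_le_log hb hgt.le
      · linarith

lemma logDiff_le_bound {a c : ℝ} (ha : 0 < a) (hc : 0 < c) :
    logDiff a c ≤ 2 / c * (1 + |Real.log c| + |Real.log a|) := by
  have hb1 : (1:ℝ) ≤ 1 + |Real.log c| + |Real.log a| := by
    have := abs_nonneg (Real.log c); have := abs_nonneg (Real.log a); linarith
  have h2c : (0:ℝ) < 2 / c := by positivity
  have base : 2 / c ≤ 2 / c * (1 + |Real.log c| + |Real.log a|) := by nlinarith
  unfold logDiff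
  rcases eq_or_ne a c with rfl | hne
  · rw [if_pos rfl]
    refine le_trans ?_ base
    rw [div_le_div_iff₀ ha ha]; nlinarith
  · rw [if_neg hne]
    rcases hne.lt_or_gt with hlt | hgt
    · -- a < c
      have e : (Real.log a - Real.log c) / (a - c) = (Real.log c - Real.log a) / (c - a) := by
        rw [← neg_sub (Real.log c), ← neg_sub c, neg_div_neg_eq]
      rw [e]
      rcases le_or_gt c (2 * a) with hca | hca
      · -- c ≤ 2a : bound by 1/a ≤ 2/c
        refine le_trans ?_ base
        have h1 : (Real.log c - Real.log a) / (c - a) ≤ 1 / a := by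
          rw [div_le_iff₀ (sub_pos.2 hlt)]
          have h2 : Real.log c - Real.log a ≤ c / a - 1 := by
            rw [← Real.log_div hc.ne' ha.ne']
            exact Real.log_le_sub_one_of_pos (div_pos hc ha)
          have h3 : c / a - 1 = 1 / a * (c - a) := by field_simp
          linarith
        refine le_trans h1 ?_
        rw [div_le_div_iff₀ ha hc]; nlinarith
      · -- 2a < c
        have hnum : 0 ≤ Real.log c - Real.log a := by
          have := Real.log_le_log ha hlt.le; linarith
        have h1 : (Real.log c - Real.log a) / (c - a)
            ≤ (Real.log c - Real.log a) / (c / 2) := by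
          apply div_le_div_of_nonneg_left hnum (by positivity)
          linarith
        have h2 : (Real.log c - Real.log a) / (c / 2)
            = 2 / c * (Real.log c - Real.log a) := by
          field_simp
        have h3 : Real.log c - Real.log a ≤ |Real.log c| + |Real.log a| := by
          have := abs_nonneg (Real.log c)
          have := le_abs_self (Real.log c)
          have := neg_abs_le (Real.log a)
          linarith
        refine le_trans h1 ?_
        rw [h2]
        apply mul_le_mul_of_nonneg_left _ h2c.le
        linarith
    · -- c < a : bound by 1/c
      refine le_trans ?_ base
      have h1 : (Real.log a - Real.log c) / (a - c) ≤ 1 / c := by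
        rw [div_le_iff₀ (sub_pos.2 hgt)]
        have h2 : Real.log a - Real.log c ≤ a / c - 1 := by
          rw [← Real.log_div ha.ne' hc.ne']
          exact Real.log_le_sub_one_of_pos (div_pos ha hc)
        have h3 : a / c - 1 = 1 / c * (a - c) := by field_simp
        linarith
      refine le_trans h1 ?_
      rw [div_le_div_iff₀ hc hc]; nlinarith

lemma measurable_logDiff : Measurable fun p : ℝ × ℝ => logDiff p.1 p.2 := by
  unfold logDiff
  apply Measurable.ite
  · exact measurableSet_eq_fun measurable_fst measurable_snd
  · exact measurable_const.div measurable_fst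
  · exact ((Real.measurable_log.comp measurable_fst).sub
      (Real.measurable_log.comp measurable_snd)).div (measurable_fst.sub measurable_snd)

lemma logDiff_integral_rep {a b : ℝ} (ha : 0 < a) (hb : 0 < b) :
    IntegrableOn (fun s => ((a + s) * (b + s))⁻¹) (Ioi 0) ∧
      ∫ s in Ioi (0:ℝ), ((a + s) * (b + s))⁻¹ = logDiff a b := by
  rcases eq_or_ne a b with rfl | hne
  · -- diagonal case, antiderivative -(a+s)⁻¹
    have hder : ∀ x ∈ Ici (0:ℝ),
        HasDerivAt (fun s : ℝ => -(a + s)⁻¹) (((a + x) * (a + x))⁻¹) x := by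
      intro x hx
      have hax : (0:ℝ) < a + x := by have := mem_Ici.mp hx; linarith
      have h1 : HasDerivAt (fun s : ℝ => a + s) 1 x := (hasDerivAt_id x).const_add a
      have h2 := (h1.inv hax.ne').neg
      have e : ((a + x) * (a + x))⁻¹ = -(-1 / (a + x) ^ 2) := by field_simp
      rw [e]; exact h2
    have hpos : ∀ x ∈ Ioi (0:ℝ), 0 ≤ ((a + x) * (a + x))⁻¹ := by
      intro x hx
      have hax : (0:ℝ) < a + x := by have := mem_Ioi.mp hx; linarith
      positivity
    have htend : Tendsto (fun s : ℝ => -(a + s)⁻¹) atTop (𝓝 0) := by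
      have h1 : Tendsto (fun s : ℝ => a + s) atTop atTop :=
        tendsto_atTop_add_const_left _ a tendsto_id
      simpa using h1.inv_tendsto_atTop.neg
    refine ⟨integrableOn_Ioi_deriv_of_nonneg' hder hpos htend, ?_⟩
    rw [integral_Ioi_of_hasDerivAt_of_nonneg' hder hpos htend]
    unfold logDiff
    rw [if_pos rfl]
    simp
  · -- off-diagonal case
    have hab : a - b ≠ 0 := sub_ne_zero.mpr hne
    have hder : ∀ x ∈ Ici (0:ℝ),
        HasDerivAt (fun s : ℝ => (Real.log (b + s) - Real.log (a + s)) / (a - b))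
          (((a + x) * (b + x))⁻¹) x := by
      intro x hx
      have hx0 : (0:ℝ) ≤ x := mem_Ici.mp hx
      have hax : (0:ℝ) < a + x := by linarith
      have hbx : (0:ℝ) < b + x := by linarith
      have h1 : HasDerivAt (fun s : ℝ => Real.log (b + s)) (1 / (b + x)) x :=
        ((hasDerivAt_id x).const_add b).log hbx.ne'
      have h2 : HasDerivAt (fun s : ℝ => Real.log (a + s)) (1 / (a + x)) x :=
        ((hasDerivAt_id x).const_add a).log hax.ne'
      have h3 := (h1.sub h2).div_const (a - b)
      have e : ((a + x) * (b + x))⁻¹ = (1 / (b + x) - 1 / (a + x)) / (a - b) := by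
        field_simp
        ring
      rw [e]; exact h3
    have hpos : ∀ x ∈ Ioi (0:ℝ), 0 ≤ ((a + x) * (b + x))⁻¹ := by
      intro x hx
      have hx0 : (0:ℝ) < x := mem_Ioi.mp hx
      have hax : (0:ℝ) < a + x := by linarith
      have hbx : (0:ℝ) < b + x := by linarith
      positivity
    have htend : Tendsto (fun s : ℝ => (Real.log (b + s) - Real.log (a + s)) / (a - b))
        atTop (𝓝 0) := by
      have h1 : Tendsto (fun s : ℝ => 1 + (b - a) * (a + s)⁻¹) atTop (𝓝 1) := by
        have h2 : Tendsto (fun s : ℝ => (a + s)⁻¹) atTop (𝓝 0) :=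
          (tendsto_atTop_add_const_left _ a tendsto_id).inv_tendsto_atTop
        have h3 : Tendsto (fun s : ℝ => (1:ℝ) + (b - a) * (a + s)⁻¹) atTop
            (𝓝 (1 + (b - a) * 0)) := (tendsto_const_nhds (x := (1:ℝ))).add (h2.const_mul (b - a))
        simpa using h3
      have h4 : Tendsto (fun s : ℝ => Real.log (1 + (b - a) * (a + s)⁻¹)) atTop (𝓝 0) := by
        have := (Real.continuousAt_log one_ne_zero).tendsto.comp h1
        simpa [Function.comp_def] using this
      have h5 : Tendsto (fun s : ℝ => Real.log (b + s) - Real.log (a + s)) atTop (𝓝 0) := by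
        apply h4.congr'
        filter_upwards [eventually_ge_atTop (0:ℝ)] with s hs
        have hax : (0:ℝ) < a + s := by linarith
        have hbx : (0:ℝ) < b + s := by linarith
        have e : 1 + (b - a) * (a + s)⁻¹ = (b + s) / (a + s) := by field_simp; ring
        rw [e, Real.log_div hbx.ne' hax.ne']
      simpa using h5.div_const (a - b)
    refine ⟨integrableOn_Ioi_deriv_of_nonneg' hder hpos htend, ?_⟩
    rw [integral_Ioi_of_hasDerivAt_of_nonneg' hder hpos htend]
    unfold logDiff
    rw [if_neg hne]
    rw [zero_sub, add_zero, add_zero]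
    rw [← neg_div, neg_sub]

lemma logDiff_lintegral_rep {a b : ℝ} (ha : 0 < a) (hb : 0 < b) :
    ∫⁻ s in Ioi (0:ℝ), ENNReal.ofReal ((a + s)⁻¹) * ENNReal.ofReal ((b + s)⁻¹)
      = ENNReal.ofReal (logDiff a b) := by
  obtain ⟨hint, heq⟩ := logDiff_integral_rep ha hb
  have h1 : ∫⁻ s in Ioi (0:ℝ), ENNReal.ofReal ((a + s)⁻¹) * ENNReal.ofReal ((b + s)⁻¹)
      = ∫⁻ s in Ioi (0:ℝ), ENNReal.ofReal (((a + s) * (b + s))⁻¹) := by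
    apply setLIntegral_congr_fun measurableSet_Ioi
    intro s hs
    have has : (0:ℝ) < a + s := by have := mem_Ioi.mp hs; linarith
    beta_reduce
    rw [mul_inv, ENNReal.ofReal_mul (by positivity)]
  have hnn : 0 ≤ᵐ[volume.restrict (Ioi (0:ℝ))] fun s => ((a + s) * (b + s))⁻¹ := by
    filter_upwards [ae_restrict_mem measurableSet_Ioi] with s hs
    have has : (0:ℝ) < a + s := by have := mem_Ioi.mp hs; linarith
    have hbs : (0:ℝ) < b + s := by have := mem_Ioi.mp hs; linarith
    positivity
  rw [h1, ← ofReal_integral_eq_lintegral_ofReal hint hnn, heq]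

/-- Key inequality equivalent to the Boolean logarithmic Sobolev inequality:
for a probability measure `μ` on `(0,∞)` with integrable logarithm and finite
Fisher-type functional, `∫ log x dμ + log(∬ (log x − log y)/(x−y) dμ dμ) ≥ 0`. -/
theorem boolean_lsi_key_inequality (μ : Measure ℝ) [IsProbabilityMeasure μ]
    (hsupp : μ (Set.Iic 0) = 0) (hlog : Integrable Real.log μ)
    (hF : Integrable (fun p : ℝ × ℝ => logDiff p.1 p.2) (μ.prod μ)) :
    0 ≤ (∫ x, Real.log x ∂μ) +
      Real.log (∫ p : ℝ × ℝ, logDiff p.1 p.2 ∂(μ.prod μ)) := by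
  set m : ℝ := ∫ x, Real.log x ∂μ with hm
  set I : ℝ := ∫ p : ℝ × ℝ, logDiff p.1 p.2 ∂(μ.prod μ) with hI
  set c : ℝ := Real.exp m with hcdef
  have hc : 0 < c := Real.exp_pos m
  -- a.e. positivity
  have hae : ∀ᵐ a ∂μ, 0 < a := by
    rw [ae_iff]
    convert hsupp using 2
    ext x; simp [not_lt]
  have hprod_ae : ∀ᵐ p ∂(μ.prod μ), 0 < p.1 ∧ 0 < p.2 := by
    rw [ae_iff]
    have hsub : {p : ℝ × ℝ | ¬(0 < p.1 ∧ 0 < p.2)}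
        ⊆ (Set.Iic (0:ℝ) ×ˢ (Set.univ : Set ℝ)) ∪ ((Set.univ : Set ℝ) ×ˢ Set.Iic (0:ℝ)) := by
      intro p hp
      simp only [mem_setOf_eq, not_and_or, not_lt] at hp
      rcases hp with h | h
      · exact Or.inl (by simp [h])
      · exact Or.inr (by simp [h])
    refine measure_mono_null hsub (measure_union_null ?_ ?_)
    · rw [Measure.prod_prod, hsupp, zero_mul]
    · rw [Measure.prod_prod, hsupp, mul_zero]
  -- integrability of x ↦ logDiff x c
  have hmeas1 : Measurable fun x : ℝ => logDiff x c :=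
    measurable_logDiff.comp (measurable_id.prodMk measurable_const)
  have hJint : Integrable (fun x : ℝ => logDiff x c) μ := by
    apply Integrable.mono' (g := fun x => 2 / c * (1 + |Real.log c| + |Real.log x|))
    · exact ((integrable_const (1 + |Real.log c|)).add hlog.abs).const_mul (2 / c)
    · exact hmeas1.aestronglyMeasurable
    · filter_upwards [hae] with x hx
      rw [Real.norm_eq_abs, abs_of_nonneg (logDiff_nonneg hx hc)]
      exact logDiff_le_bound hx hc
  set J : ℝ := ∫ x, logDiff x c ∂μ with hJ
  -- lower bound for J
  have hJlow : 1 / c ≤ J := by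
    have hblo : Integrable (fun x => (2 + m - Real.log x) / (2 * c)) μ :=
      ((integrable_const (2 + m)).sub hlog).div_const (2 * c)
    have hmono : ∀ᵐ x ∂μ, (2 + m - Real.log x) / (2 * c) ≤ logDiff x c := by
      filter_upwards [hae] with x hx
      have hk := key_pointwise hx hc
      rw [hcdef, Real.log_exp] at hk
      rw [div_le_iff₀ (by positivity)]
      linarith
    have hval : ∫ x, (2 + m - Real.log x) / (2 * c) ∂μ = 1 / c := by
      rw [integral_div, integral_sub (integrable_const _) hlog, integral_const]
      simp only [measure_univ, probReal_univ, ENNReal.toReal_one, one_smul, ← hm]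
      field_simp
      ring
    calc 1 / c = ∫ x, (2 + m - Real.log x) / (2 * c) ∂μ := hval.symm
    _ ≤ J := integral_mono_ae hblo hJint hmono
  have hJpos : 0 < J := lt_of_lt_of_le (by positivity) hJlow
  -- ENNReal machinery
  set H : ℝ → ℝ≥0∞ := fun s => ∫⁻ x, ENNReal.ofReal ((x + s)⁻¹) ∂μ with hH
  have hmeasH : Measurable H := by
    apply Measurable.lintegral_prod_left'
      (f := fun q : ℝ × ℝ => ENNReal.ofReal ((q.1 + q.2)⁻¹))
    exact (measurable_fst.add measurable_snd).inv.ennreal_ofReal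
  have hmeasg : Measurable fun s : ℝ => ENNReal.ofReal ((c + s)⁻¹) :=
    (measurable_const.add measurable_id).inv.ennreal_ofReal
  -- identity for the double integral
  have hIe : ∫⁻ p : ℝ × ℝ, ENNReal.ofReal (logDiff p.1 p.2) ∂(μ.prod μ)
      = ∫⁻ s in Ioi (0:ℝ), H s * H s := by
    have h1 : ∫⁻ p : ℝ × ℝ, ENNReal.ofReal (logDiff p.1 p.2) ∂(μ.prod μ)
        = ∫⁻ p : ℝ × ℝ, (∫⁻ s in Ioi (0:ℝ),
            ENNReal.ofReal ((p.1 + s)⁻¹) * ENNReal.ofReal ((p.2 + s)⁻¹)) ∂(μ.prod μ) := by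
      apply lintegral_congr_ae
      filter_upwards [hprod_ae] with p hp
      exact (logDiff_lintegral_rep hp.1 hp.2).symm
    rw [h1]
    rw [lintegral_lintegral_swap]
    · apply lintegral_congr
      intro s
      exact lintegral_prod_mul
        ((measurable_id.add measurable_const).inv.ennreal_ofReal).aemeasurable
        ((measurable_id.add measurable_const).inv.ennreal_ofReal).aemeasurable
    · apply Measurable.aemeasurable
      exact ((measurable_fst.fst.add measurable_snd).inv.ennreal_ofReal).mul
        ((measurable_fst.snd.add measurable_snd).inv.ennreal_ofReal)
  -- identity for J
  have hJe : ∫⁻ x, ENNReal.ofReal (logDiff x c) ∂μ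
      = ∫⁻ s in Ioi (0:ℝ), H s * ENNReal.ofReal ((c + s)⁻¹) := by
    have h1 : ∫⁻ x, ENNReal.ofReal (logDiff x c) ∂μ
        = ∫⁻ x, (∫⁻ s in Ioi (0:ℝ),
            ENNReal.ofReal ((x + s)⁻¹) * ENNReal.ofReal ((c + s)⁻¹)) ∂μ := by
      apply lintegral_congr_ae
      filter_upwards [hae] with x hx
      exact (logDiff_lintegral_rep hx hc).symm
    rw [h1]
    rw [lintegral_lintegral_swap]
    · apply lintegral_congr
      intro s
      exact lintegral_mul_const _ (measurable_id.add measurable_const).inv.ennreal_ofReal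
    · apply Measurable.aemeasurable
      exact ((measurable_fst.add measurable_snd).inv.ennreal_ofReal).mul
        ((measurable_const.add measurable_snd).inv.ennreal_ofReal)
  -- transfer to ofReal
  have hInn : 0 ≤ᵐ[μ.prod μ] fun p : ℝ × ℝ => logDiff p.1 p.2 := by
    filter_upwards [hprod_ae] with p hp
    exact logDiff_nonneg hp.1 hp.2
  have hJnn : 0 ≤ᵐ[μ] fun x => logDiff x c := by
    filter_upwards [hae] with x hx
    exact logDiff_nonneg hx hc
  have hIof : ENNReal.ofReal I = ∫⁻ s in Ioi (0:ℝ), H s * H s := by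
    rw [hI, ofReal_integral_eq_lintegral_ofReal hF hInn, hIe]
  have hJof : ENNReal.ofReal J = ∫⁻ s in Ioi (0:ℝ), H s * ENNReal.ofReal ((c + s)⁻¹) := by
    rw [hJ, ofReal_integral_eq_lintegral_ofReal hJint hJnn, hJe]
  have hgg : ∫⁻ s in Ioi (0:ℝ), ENNReal.ofReal ((c + s)⁻¹) * ENNReal.ofReal ((c + s)⁻¹)
      = ENNReal.ofReal (1 / c) := by
    rw [logDiff_lintegral_rep hc hc]
    unfold logDiff
    rw [if_pos rfl]
  -- Cauchy-Schwarz
  have hsq : ∀ x : ℝ≥0∞, x ^ (2:ℝ) = x * x := fun x => by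
    rw [show (2:ℝ) = ((2:ℕ):ℝ) by norm_num, ENNReal.rpow_natCast, pow_two]
  have hconj : Real.HolderConjugate 2 2 := Real.HolderConjugate.two_two
  have hCS := ENNReal.lintegral_mul_le_Lp_mul_Lq (volume.restrict (Ioi (0:ℝ))) hconj
    hmeasH.aemeasurable hmeasg.aemeasurable
  simp only [Pi.mul_apply, hsq] at hCS
  rw [← hJof, ← hIof, hgg] at hCS
  have hhalf : ∀ x : ℝ≥0∞, x ^ (1/2:ℝ) * x ^ (1/2:ℝ) = x := fun x => by
    rw [← hsq (x ^ (1/2:ℝ)), ← ENNReal.rpow_mul]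
    norm_num
  have hquad : ENNReal.ofReal J * ENNReal.ofReal J
      ≤ ENNReal.ofReal I * ENNReal.ofReal (1 / c) := by
    calc ENNReal.ofReal J * ENNReal.ofReal J
        ≤ ((ENNReal.ofReal I) ^ (1/2:ℝ) * (ENNReal.ofReal (1/c)) ^ (1/2:ℝ))
          * ((ENNReal.ofReal I) ^ (1/2:ℝ) * (ENNReal.ofReal (1/c)) ^ (1/2:ℝ)) :=
          mul_le_mul' hCS hCS
    _ = ((ENNReal.ofReal I) ^ (1/2:ℝ) * (ENNReal.ofReal I) ^ (1/2:ℝ))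
          * ((ENNReal.ofReal (1/c)) ^ (1/2:ℝ) * (ENNReal.ofReal (1/c)) ^ (1/2:ℝ)) := by
          ring
    _ = ENNReal.ofReal I * ENNReal.ofReal (1 / c) := by rw [hhalf, hhalf]
  -- back to reals
  have hI0 : 0 ≤ I := integral_nonneg_of_ae hInn
  have hreal : J * J ≤ I * (1 / c) := by
    rw [← ENNReal.ofReal_mul hJpos.le, ← ENNReal.ofReal_mul hI0] at hquad
    exact (ENNReal.ofReal_le_ofReal_iff (by positivity)).mp hquad
  have hfin : 1 / c ≤ I := by
    have h1 : (1 / c) * (1 / c) ≤ J * J :=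
      mul_le_mul hJlow hJlow (by positivity) hJpos.le
    have h2 : (1 / c) * (1 / c) ≤ I * (1 / c) := le_trans h1 hreal
    exact le_of_mul_le_mul_right (by linarith [h2]) (by positivity : (0:ℝ) < 1 / c)
  have hIpos : 0 < I := lt_of_lt_of_le (by positivity) hfin
  have hexp : Real.exp (-m) ≤ I := by
    rw [Real.exp_neg, ← one_div, ← hcdef]
    exact hfin
  have := (Real.le_log_iff_exp_le hIpos).mpr hexp
  linarith
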